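/- Let x, y, r, r', S, N be nonzero Gaussian integers with (Sx + r)(Sy + r') = N, |r| < |S|/√2, |r'| < |S|/√2, and |S|³ > |N|. Then |x| ≤ 5|S|, |y| ≤ 5|S|, and |xy| < 9|S|. -/

import Mathlib

open GaussianInt in
lemma gaussianInt_one_le_abs (z : GaussianInt) (hz : z ≠ 0) :
    1 ≤ ‖(z : ℂ)‖ := by
  have h1 : 1 ≤ (z.norm : ℝ) := by
    have : 1 ≤ z.norm := Int.add_one_le_of_lt (GaussianInt.norm_pos.2 hz)
    exact_mod_cast this
  have h2 : (z.norm : ℝ) = Complex.normSq (z : ℂ) := intCast_real_norm z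
  have h3 : Complex.normSq (z : ℂ) = ‖(z : ℂ)‖ ^ 2 := (Complex.sq_norm _).symm
  nlinarith [norm_nonneg (z : ℂ)]

set_option maxHeartbeats 1000000 in
/-- If x, y, r, r', S, N are nonzero Gaussian integers with (Sx+r)(Sy+r') = N,
|r|, |r'| < |S|/√2 and |S|³ > |N|, then |x|, |y| ≤ 5|S| and |xy| < 9|S|. -/
theorem gaussianInt_xy_lemma (x y r r' S N : GaussianInt)
    (hx : x ≠ 0) (hy : y ≠ 0) (hr : r ≠ 0) (hr' : r' ≠ 0) (hS : S ≠ 0) (hN : N ≠ 0)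
    (heq : (S * x + r) * (S * y + r') = N)
    (hrS : ‖(r : ℂ)‖ < ‖(S : ℂ)‖ / Real.sqrt 2)
    (hr'S : ‖(r' : ℂ)‖ < ‖(S : ℂ)‖ / Real.sqrt 2)
    (hSN : ‖(S : ℂ)‖ ^ 3 > ‖(N : ℂ)‖) :
    ‖(x : ℂ)‖ ≤ 5 * ‖(S : ℂ)‖ ∧
    ‖(y : ℂ)‖ ≤ 5 * ‖(S : ℂ)‖ ∧
    ‖((x * y : GaussianInt) : ℂ)‖ < 9 * ‖(S : ℂ)‖ := by
  set t := Real.sqrt 2 with ht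
  have ht2 : t ^ 2 = 2 := Real.sq_sqrt (by norm_num)
  have ht14 : (1.4 : ℝ) ≤ t := by nlinarith [Real.sqrt_nonneg 2]
  have htpos : (0 : ℝ) < t := by linarith
  set w := t⁻¹ with hwdef
  have hwpos : (0 : ℝ) < w := by positivity
  have htw : t * w = 1 := mul_inv_cancel₀ (ne_of_gt htpos)
  have hwle : w ≤ 0.72 := by
    rw [hwdef, inv_le_comm₀ htpos (by norm_num)]
    linarith
  set s := ‖(S : ℂ)‖ with hs
  set a := ‖(x : ℂ)‖ with ha
  set b := ‖(y : ℂ)‖ with hb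
  clear_value t w s a b
  have hs1 : 1 ≤ s := hs ▸ gaussianInt_one_le_abs S hS
  have ha1 : 1 ≤ a := ha ▸ gaussianInt_one_le_abs x hx
  have hb1 : 1 ≤ b := hb ▸ gaussianInt_one_le_abs y hy
  have hceq : ((S : ℂ) * x + r) * ((S : ℂ) * y + r') = (N : ℂ) := by
    rw [← GaussianInt.toComplex_mul, ← GaussianInt.toComplex_mul,
      ← GaussianInt.toComplex_add, ← GaussianInt.toComplex_add,
      ← GaussianInt.toComplex_mul, heq]
  set u := ‖((S : ℂ) * x + r)‖ with hu
  set v := ‖((S : ℂ) * y + r')‖ with hv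
  clear_value u v
  have huvN : u * v < s ^ 3 := by
    have : u * v = ‖(N : ℂ)‖ := by rw [hu, hv, ← norm_mul, hceq]
    linarith [this ▸ hSN]
  have hrw : ‖(r : ℂ)‖ < s * w := by
    rw [div_eq_mul_inv, ← hwdef] at hrS; exact hrS
  have hr'w : ‖(r' : ℂ)‖ < s * w := by
    rw [div_eq_mul_inv, ← hwdef] at hr'S; exact hr'S
  have hul : s * a ≤ u + ‖(r : ℂ)‖ := by
    calc s * a = ‖((S : ℂ) * x)‖ := by rw [hs, ha, norm_mul]
      _ = ‖(((S : ℂ) * x + r) - r)‖ := by ring_nf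
      _ ≤ u + ‖(r : ℂ)‖ := by
          rw [hu]; simpa using norm_sub_le ((S : ℂ) * x + r) r
  have hvl : s * b ≤ v + ‖(r' : ℂ)‖ := by
    calc s * b = ‖((S : ℂ) * y)‖ := by rw [hs, hb, norm_mul]
      _ = ‖(((S : ℂ) * y + r') - r')‖ := by ring_nf
      _ ≤ v + ‖(r' : ℂ)‖ := by
          rw [hv]; simpa using norm_sub_le ((S : ℂ) * y + r') r'
  have hul' : s * (a - w) < u := by nlinarith
  have hvl' : s * (b - w) < v := by nlinarith
  have hspos : (0 : ℝ) < s := by linarith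
  have haw : (0 : ℝ) < a - w := by nlinarith
  have hbw : (0 : ℝ) < b - w := by nlinarith
  have hxpos : 0 < s * (a - w) := mul_pos hspos haw
  have hypos : 0 < s * (b - w) := mul_pos hspos hbw
  have key0 : s * (a - w) * (s * (b - w)) < s ^ 3 := by
    have h1 : s * (a - w) * (s * (b - w)) < u * v := by
      apply mul_lt_mul' (le_of_lt hul') hvl' (le_of_lt hypos) (lt_trans hxpos hul')
    linarith
  have key : (a - w) * (b - w) < s := by
    have h : (a - w) * (b - w) * s ^ 2 < s * s ^ 2 := by nlinarith [key0]
    exact lt_of_mul_lt_mul_right h (sq_nonneg s)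
  have hxb : a ≤ 5 * s := by
    nlinarith [mul_nonneg haw.le (sub_nonneg.mpr hb1), mul_pos haw hbw]
  have hyb : b ≤ 5 * s := by
    nlinarith [mul_nonneg hbw.le (sub_nonneg.mpr ha1), mul_pos haw hbw]
  refine ⟨hxb, hyb, ?_⟩
  have habs : ‖((x * y : GaussianInt) : ℂ)‖ = a * b := by
    rw [GaussianInt.toComplex_mul, norm_mul, ← ha, ← hb]
  rw [habs]
  nlinarith [key, mul_nonneg hwpos.le (sub_nonneg.mpr hxb),
    mul_nonneg hwpos.le (sub_nonneg.mpr hyb), sq_nonneg w]
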